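/- With notation as in the context, suppose M_λ = eM ∩ M is a free 𝒪-module of rank 1. Then the congruence module C_0^λ(M) is a cyclic 𝒪-module, C_0^λ(M) ≅ 𝒪/η_λ(M), and η_λ(M) ⊇ η_λ. -/

import Mathlib

/-- The 0-th Fitting ideal of a module `N` over a commutative ring `R`. -/
def fittingIdeal (R : Type*) [CommRing R] (N : Type*) [AddCommGroup N] [Module R N] :
    Ideal R :=
  Ideal.span { r : R | ∃ (n : ℕ) (π : (Fin n → R) →ₗ[R] N) (_ : Function.Surjective π)
    (A : Matrix (Fin n) (Fin n) R), (∀ j, π (fun i => A i j) = 0) ∧ r = A.det }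

/-- The `𝒪`-submodule `e·M` of `M_E`. -/
noncomputable def eMsub {O TE M ME : Type*} [CommRing O] [CommRing TE] [Algebra O TE]
    [AddCommGroup M] [Module O M] [AddCommGroup ME] [Module O ME] [Module TE ME]
    [IsScalarTower O TE ME] (e : TE) (iota : M →ₗ[O] ME) : Submodule O ME :=
  Submodule.span O {x : ME | ∃ m : M, x = e • iota m}

/-- The congruence module `C₀^λ(M) = e·M/(e·M ∩ M)`, formed inside `M_E`. -/
noncomputable abbrev C0M {O TE M ME : Type*} [CommRing O] [CommRing TE] [Algebra O TE]
    [AddCommGroup M] [Module O M] [AddCommGroup ME] [Module O ME] [Module TE ME]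
    [IsScalarTower O TE ME] (e : TE) (iota : M →ₗ[O] ME) :=
  ↥(eMsub e iota) ⧸
    (Submodule.comap (eMsub e iota).subtype (eMsub e iota ⊓ LinearMap.range iota))

lemma aux_fitting_le_ann {R : Type*} [CommRing R] {N : Type*} [AddCommGroup N] [Module R N] :
    fittingIdeal R N ≤ (⊤ : Submodule R N).annihilator := by
  rw [fittingIdeal, Ideal.span_le]
  rintro r ⟨n, π, hπ, A, hcol, rfl⟩
  rw [SetLike.mem_coe, Submodule.mem_annihilator]
  intro x _
  obtain ⟨v, rfl⟩ := hπ x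
  have hmul : ∀ w : Fin n → R, π (A.mulVec w) = 0 := by
    intro w
    have h1 : A.mulVec w = ∑ j, w j • (fun i => A i j) := by
      ext i
      simp [Matrix.mulVec, dotProduct, Finset.sum_apply, mul_comm]
    rw [h1, map_sum]
    simp [hcol]
  have h2 : A.det • v = A.mulVec ((Matrix.adjugate A).mulVec v) := by
    rw [Matrix.mulVec_mulVec, Matrix.mul_adjugate, Matrix.smul_mulVec, Matrix.one_mulVec]
  rw [← map_smul, h2, hmul]

lemma aux_ann_quot {R : Type*} [CommRing R] (I : Ideal R) :
    (⊤ : Submodule R (R ⧸ I)).annihilator = I := by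
  ext r
  rw [Submodule.mem_annihilator]
  constructor
  · intro h
    have := h (Submodule.Quotient.mk 1) trivial
    rwa [← Submodule.Quotient.mk_smul, smul_eq_mul, mul_one, Submodule.Quotient.mk_eq_zero] at this
  · intro hr x _
    obtain ⟨y, rfl⟩ := Submodule.Quotient.mk_surjective I x
    rw [← Submodule.Quotient.mk_smul, Submodule.Quotient.mk_eq_zero, smul_eq_mul]
    exact Ideal.mul_mem_right y I hr

/-- In the standard congruence-module setup, if `M_λ = eM ∩ M` is a free
`𝒪`-module of rank `1`, then the congruence module `C₀^λ(M)` is a cyclic `𝒪`-module,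
`C₀^λ(M) ≅ 𝒪/η_λ(M)`, and `η_λ(M) ⊇ η_λ = λ(Ann_T(ker λ))`. -/
theorem statement6
    {O : Type*} [CommRing O] [IsDomain O] [IsDiscreteValuationRing O]
    [IsAdicComplete (IsLocalRing.maximalIdeal O) O]
    {E : Type*} [Field E] [Algebra O E] [IsFractionRing O E]
    {T : Type*} [CommRing T] [IsReduced T] [IsLocalRing T]
    [Algebra O T] [Module.Finite O T] [Module.Flat O T]
    {TE : Type*} [CommRing TE] [Algebra T TE] [Algebra O TE] [Algebra E TE]
    [IsScalarTower O T TE] [IsScalarTower O E TE]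
    [IsLocalization (Algebra.algebraMapSubmonoid T (nonZeroDivisors O)) TE]
    (lam : T →ₐ[O] O)
    (lamE : TE →ₐ[E] E) (e : TE)
    (hlamE : ∀ t : T, lamE (algebraMap T TE t) = algebraMap O E (lam t))
    (he1 : lamE e = 1)
    (he2 : ∀ P : Ideal TE, P.IsPrime → P ≠ RingHom.ker lamE → e ∈ P)
    {M : Type*} [AddCommGroup M] [Module O M] [Module T M] [IsScalarTower O T M]
    [Module.Finite T M] [Module.Free O M]
    {ME : Type*} [AddCommGroup ME] [Module O ME] [Module TE ME] [IsScalarTower O TE ME]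
    (iota : M →ₗ[O] ME) [IsLocalizedModule (nonZeroDivisors O) iota]
    (hiota : ∀ (t : T) (m : M), iota (t • m) = algebraMap T TE t • iota m)
    (hrk1 : Nonempty (Module.Basis (Fin 1) O ↥(eMsub e iota ⊓ LinearMap.range iota))) :
    (∃ x : C0M e iota, ∀ y : C0M e iota, ∃ c : O, y = c • x) ∧
    Nonempty ((C0M e iota) ≃ₗ[O] (O ⧸ fittingIdeal O (C0M e iota))) ∧
    Ideal.map lam (Submodule.annihilator (RingHom.ker lam)) ≤ fittingIdeal O (C0M e iota) := by
  classical
  obtain ⟨b⟩ := hrk1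
  set S : Submonoid T := Algebra.algebraMapSubmonoid T (nonZeroDivisors O) with hS
  set P : Submodule O ME := eMsub e iota with hPdef
  set N : Submodule O ME := eMsub e iota ⊓ LinearMap.range iota with hNdef
  set N' : Submodule O P := Submodule.comap P.subtype N with hN'def
  -- Step B: find c ∈ O⁰ and t₀ ∈ T with c • e = algebraMap t₀
  obtain ⟨⟨t₀, s⟩, hs⟩ := IsLocalization.surj S e
  obtain ⟨c, hc, hcs⟩ := s.2
  have hce : c • e = algebraMap T TE t₀ := by
    rw [Algebra.smul_def, IsScalarTower.algebraMap_apply O T TE, hcs, mul_comm]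
    exact hs
  have key_c : ∀ m : M, c • (e • iota m) = iota (t₀ • m) := by
    intro m
    rw [← smul_assoc, hce, hiota]
  -- c • P ⊆ range iota
  have hcP : ∀ x ∈ P, c • x ∈ LinearMap.range iota := by
    intro x hx
    induction hx using Submodule.span_induction with
    | mem x hx => obtain ⟨m, rfl⟩ := hx; exact ⟨t₀ • m, (key_c m).symm⟩
    | zero => rw [smul_zero]; exact Submodule.zero_mem _
    | add x y hx hy ihx ihy => rw [smul_add]; exact Submodule.add_mem _ ihx ihy
    | smul a x hx ih => rw [smul_comm]; exact Submodule.smul_mem _ a ih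
  -- c acts injectively on ME
  have hu := IsLocalizedModule.map_units iota ⟨c, hc⟩
  have hcreg : ∀ x y : ME, c • x = c • y → x = y := by
    intro x y hxy
    have hkeyinv : ∀ z : ME, ((hu.unit⁻¹ : (Module.End O ME)ˣ) : Module.End O ME) (c • z) = z := by
      intro z
      have h1 : (hu.unit : Module.End O ME) z = c • z := by rw [IsUnit.unit_spec]; rfl
      rw [← h1, ← Module.End.mul_apply, Units.inv_mul, Module.End.one_apply]
    rw [← hkeyinv x, hxy, hkeyinv]
  have hNP : N ≤ P := inf_le_left
  -- the map g : P →ₗ N, x ↦ c • x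
  have hmemN : ∀ x : P, c • (x : ME) ∈ N := fun x =>
    ⟨P.smul_mem c x.2, hcP _ x.2⟩
  let g : P →ₗ[O] N := LinearMap.codRestrict N (c • P.subtype) (fun x => hmemN x)
  have hg : Function.Injective g := by
    intro x y hxy
    have := congrArg (Subtype.val) hxy
    exact Subtype.ext (hcreg _ _ this)
  let eN : N ≃ₗ[O] O := b.repr ≪≫ₗ Finsupp.LinearEquiv.finsuppUnique O O (Fin 1)
  let j : P →ₗ[O] O := eN.toLinearMap ∘ₗ g
  have hj : Function.Injective j := eN.injective.comp hg
  obtain ⟨p, hp⟩ := (IsPrincipalIdealRing.principal (LinearMap.range j)).principal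
  -- p ≠ 0
  have hb0 : ((b 0 : N) : ME) ≠ 0 := fun h => b.ne_zero 0 (Subtype.ext h)
  have hy0P : ((b 0 : N) : ME) ∈ P := hNP (b 0).2
  have hp0 : p ≠ 0 := by
    intro h
    have hjne : j ⟨_, hy0P⟩ ≠ 0 := by
      intro hz
      apply hb0
      have hg0 : g ⟨_, hy0P⟩ = 0 := (LinearEquiv.map_eq_zero_iff eN).mp hz
      have h2 : c • ((b 0 : N) : ME) = c • 0 := by
        rw [smul_zero]; exact congrArg Subtype.val hg0
      exact hcreg _ 0 h2
    apply hjne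
    have hmem : j ⟨_, hy0P⟩ ∈ LinearMap.range j := ⟨_, rfl⟩
    rw [hp, h] at hmem
    rwa [Submodule.span_zero_singleton, Submodule.mem_bot] at hmem
  let ε : P ≃ₗ[O] O :=
    (LinearEquiv.ofInjective j hj) ≪≫ₗ (LinearEquiv.ofEq _ _ hp) ≪≫ₗ
      (LinearEquiv.toSpanNonzeroSingleton O O p hp0).symm
  set I : Ideal O := Submodule.map ε.toLinearMap N' with hIdef
  let q : (P ⧸ N') ≃ₗ[O] (O ⧸ I) := Submodule.Quotient.equiv N' I ε rfl
  -- annihilator of C0M equals I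
  have htrans : ∀ r : O, (∀ z : P ⧸ N', r • z = 0) ↔ (∀ w : O ⧸ I, r • w = 0) := by
    intro r
    constructor
    · intro h w
      obtain ⟨z, rfl⟩ := q.surjective w
      rw [← map_smul, h, map_zero]
    · intro h z
      apply q.injective
      rw [map_smul, h, map_zero]
  have hann : (⊤ : Submodule O (P ⧸ N')).annihilator = I := by
    ext r
    rw [Submodule.mem_annihilator, ← aux_ann_quot I, Submodule.mem_annihilator]
    constructor
    · intro h w _
      exact (htrans r).mp (fun z => h z trivial) w
    · intro h z _
      exact (htrans r).mpr (fun w => h w trivial) z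
  -- I ≤ fittingIdeal
  obtain ⟨a, ha⟩ := (IsPrincipalIdealRing.principal I).principal
  have haI : a ∈ I := by rw [ha]; exact Submodule.mem_span_singleton_self a
  have hIle : I ≤ fittingIdeal O (C0M e iota) := by
    rw [ha, Submodule.span_singleton_le_iff_mem]
    apply Ideal.subset_span
    refine ⟨1, q.symm.toLinearMap ∘ₗ I.mkQ ∘ₗ (LinearMap.proj 0), ?_,
      (fun _ _ => a), ?_, ?_⟩
    · exact q.symm.surjective.comp ((Submodule.mkQ_surjective I).comp
        (fun x => ⟨fun _ => x, rfl⟩))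
    · intro jj
      show q.symm (Submodule.Quotient.mk a) = 0
      rw [(Submodule.Quotient.mk_eq_zero I).mpr haI, map_zero]
    · exact (Matrix.det_fin_one (A := (fun _ _ => a : Matrix (Fin 1) (Fin 1) O))).symm
  have hfle : fittingIdeal O (C0M e iota) ≤ I := by
    rw [← hann]
    exact aux_fitting_le_ann
  have hFI : fittingIdeal O (C0M e iota) = I := le_antisymm hfle hIle
  refine ⟨?_, ?_, ?_⟩
  · refine ⟨q.symm (Submodule.Quotient.mk 1), fun y => ?_⟩
    obtain ⟨r, hr⟩ := Submodule.Quotient.mk_surjective I (q y)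
    refine ⟨r, ?_⟩
    rw [← map_smul, ← q.symm_apply_apply y, ← hr]
    congr 1
    rw [← Submodule.Quotient.mk_smul, smul_eq_mul, mul_one]
  · exact ⟨q ≪≫ₗ Submodule.quotEquivOfEq I _ hFI.symm⟩
  · -- η_λ ⊆ fitting ideal
    haveI hred : IsReduced TE := by
      constructor
      rintro x ⟨nn, hxn⟩
      rcases nn with _ | nn
      · simpa using congr_arg (· * x) hxn
      · obtain ⟨⟨y, m⟩, hx⟩ := IsLocalization.surj S x
        dsimp only at hx
        have hx' := congr_arg (· ^ (nn + 1)) hx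
        simp only [mul_pow, hxn, zero_mul, ← RingHom.map_pow] at hx'
        rw [← (algebraMap T TE).map_zero] at hx'
        obtain ⟨m', hm'⟩ := (IsLocalization.eq_iff_exists S TE).mp hx'
        apply_fun (· * (m' : T) ^ nn) at hm'
        simp only [mul_assoc, zero_mul, mul_zero] at hm'
        rw [← mul_left_comm, ← pow_succ', ← mul_pow] at hm'
        replace hm' := IsNilpotent.eq_zero ⟨_, hm'.symm⟩
        rw [← (IsLocalization.map_units TE m).mul_left_inj, hx, zero_mul,
          IsLocalization.map_eq_zero_iff S]
        exact ⟨m', by rw [← hm', mul_comm]⟩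
    have hmax : (RingHom.ker lamE).IsMaximal :=
      RingHom.ker_isMaximal_of_surjective lamE
        (fun x => ⟨algebraMap E TE x, lamE.commutes x⟩)
    have hkey : ∀ t : T, t ∈ Submodule.annihilator (RingHom.ker lam) →
        algebraMap T TE t = lam t • e := by
      intro t ht
      have hnil : (algebraMap T TE t - lam t • e) ∈ nilradical TE := by
        rw [nilradical_eq_sInf]
        apply Submodule.mem_sInf.mpr
        rintro Pr hPr
        by_cases hPk : Pr = RingHom.ker lamE
        · subst hPk
          rw [RingHom.mem_ker]
          have h1 : lamE (lam t • e) = algebraMap O E (lam t) := by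
            rw [Algebra.smul_def, map_mul, he1, mul_one,
              IsScalarTower.algebraMap_apply O E TE, lamE.commutes, Algebra.algebraMap_self,
              RingHom.id_apply]
          rw [map_sub, hlamE, h1, sub_self]
        · have heP := he2 Pr hPr hPk
          have hnle : ¬ RingHom.ker lamE ≤ Pr := by
            intro hle
            exact hPk ((hmax.eq_of_le hPr.ne_top hle)).symm
          obtain ⟨x, hxk, hxP⟩ := SetLike.not_le_iff_exists.mp hnle
          have hx0 : algebraMap T TE t * x = 0 := by
            obtain ⟨⟨u, s'⟩, hsu⟩ := IsLocalization.surj S x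
            dsimp only at hsu
            have hu0 : lam u = 0 := by
              have h3 := congrArg lamE hsu
              rw [map_mul, RingHom.mem_ker.mp hxk, zero_mul, hlamE] at h3
              exact (IsFractionRing.injective O E) (by rw [← h3, map_zero])
            have htu : t * u = 0 := by
              have h5 := Submodule.mem_annihilator.mp ht u (RingHom.mem_ker.mpr hu0)
              rwa [smul_eq_mul] at h5
            have h4 : (algebraMap T TE t * x) * algebraMap T TE (s' : T) = 0 := by
              rw [mul_assoc, hsu, ← map_mul, htu, map_zero]
            exact ((IsLocalization.map_units TE s').mul_left_eq_zero).mp h4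
          have hxmem : algebraMap T TE t ∈ Pr := by
            have h6 : algebraMap T TE t * x ∈ Pr := hx0 ▸ Pr.zero_mem
            exact (hPr.mem_or_mem h6).resolve_right hxP
          exact Ideal.sub_mem _ hxmem
            (by rw [Algebra.smul_def]; exact Ideal.mul_mem_left _ _ heP)
      have h7 := IsNilpotent.eq_zero (mem_nilradical.mp hnil)
      exact sub_eq_zero.mp h7
    rw [Ideal.map_le_iff_le_comap]
    intro t ht
    rw [Ideal.mem_comap, hFI, ← hann, Submodule.mem_annihilator]
    intro z _
    obtain ⟨x, rfl⟩ := Submodule.Quotient.mk_surjective N' z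
    rw [← Submodule.Quotient.mk_smul, Submodule.Quotient.mk_eq_zero]
    have hall : ∀ v, v ∈ P → lam t • v ∈ LinearMap.range iota := by
      intro v hv
      induction hv using Submodule.span_induction with
      | mem v hv =>
        obtain ⟨m, rfl⟩ := hv
        refine ⟨t • m, ?_⟩
        rw [hiota, hkey t ht, smul_assoc]
      | zero => rw [smul_zero]; exact Submodule.zero_mem _
      | add u v hu hv ihu ihv => rw [smul_add]; exact Submodule.add_mem _ ihu ihv
      | smul a v hv ih => rw [smul_comm]; exact Submodule.smul_mem _ a ih
    show (lam t • (x : ME)) ∈ N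
    exact ⟨P.smul_mem _ x.2, hall _ x.2⟩
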